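/- arXiv:1409.3107 — 2 statements merged into one kernel-verified Lean document; each statement's English description precedes it below -/
import Mathlib

section
/- For all real numbers α > 2, c > 0 and N > 0, the integral ∫₀^∞ 2πr·(1 − (1 + c·r^(−α))^(−N)) dr equals π·c^(2/α)·Γ(N + 2/α)·Γ(1 − 2/α) / Γ(N). -/
open MeasureTheory Real Set

lemma realBeta (a b : ℝ) (ha : 0 < a) (hb : 0 < b) :
    ∫ x in Set.Ioo (0:ℝ) 1, x ^ (a-1) * (1-x) ^ (b-1)
      = Real.Gamma a * Real.Gamma b / Real.Gamma (a+b) := by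
  have key := Complex.Gamma_mul_Gamma_eq_betaIntegral (s := (a:ℂ)) (t := (b:ℂ))
    (by simpa using ha) (by simpa using hb)
  have hbeta : Complex.betaIntegral (a:ℂ) (b:ℂ)
      = ((∫ x in (0:ℝ)..1, x ^ (a-1) * (1-x) ^ (b-1) : ℝ) : ℂ) := by
    rw [Complex.betaIntegral, ← intervalIntegral.integral_ofReal]
    apply intervalIntegral.integral_congr
    intro x hx
    rw [Set.uIcc_of_le (by norm_num : (0:ℝ) ≤ 1)] at hx
    have hx0 : (0:ℝ) ≤ x := hx.1
    have hx1 : (0:ℝ) ≤ 1 - x := by linarith [hx.2]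
    simp only [Complex.ofReal_mul, Complex.ofReal_cpow hx0, Complex.ofReal_cpow hx1]
    push_cast
    ring_nf
  have hGab : Real.Gamma (a+b) ≠ 0 := (Real.Gamma_pos_of_pos (by linarith)).ne'
  have : ((Real.Gamma a * Real.Gamma b : ℝ) : ℂ)
      = ((Real.Gamma (a+b) * ∫ x in (0:ℝ)..1, x ^ (a-1) * (1-x) ^ (b-1) : ℝ) : ℂ) := by
    push_cast
    rw [← Complex.Gamma_ofReal, ← Complex.Gamma_ofReal, ← Complex.Gamma_ofReal, ← hbeta]
    convert key using 2 <;> push_cast <;> ring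
  have h2 := Complex.ofReal_injective this
  rw [intervalIntegral.integral_of_le (by norm_num : (0:ℝ) ≤ 1),
    MeasureTheory.integral_Ioc_eq_integral_Ioo] at h2
  field_simp
  linarith [h2]

lemma betaIoi (a b : ℝ) (ha : 0 < a) (hb : 0 < b) :
    ∫ x in Set.Ioi (0:ℝ), x ^ (a-1) * (1+x) ^ (-(a+b))
      = Real.Gamma a * Real.Gamma b / Real.Gamma (a+b) := by
  rw [← realBeta a b ha hb]
  have himg : (fun t : ℝ => t / (1 - t)) '' Set.Ioo 0 1 = Set.Ioi (0:ℝ) := by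
    ext y
    constructor
    · rintro ⟨t, ⟨ht0, ht1⟩, rfl⟩
      exact div_pos ht0 (by linarith)
    · intro hy
      refine ⟨y / (1 + y), ⟨div_pos hy (by linarith [Set.mem_Ioi.mp hy]), ?_⟩, ?_⟩
      · rw [div_lt_one (by linarith [Set.mem_Ioi.mp hy])]; linarith [Set.mem_Ioi.mp hy]
      · have h1y : (0:ℝ) < 1 + y := by linarith [Set.mem_Ioi.mp hy]
        field_simp
        ring
  have hderiv : ∀ t ∈ Set.Ioo (0:ℝ) 1, HasDerivWithinAt (fun t : ℝ => t / (1 - t))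
      (((1 - t) ^ 2)⁻¹) (Set.Ioo 0 1) t := by
    intro t ht
    have h1t : (1:ℝ) - t ≠ 0 := by have := ht.2; intro h; linarith
    have := (hasDerivAt_id t).div ((hasDerivAt_id t).const_sub 1) h1t
    refine this.hasDerivWithinAt.congr_deriv ?_
    simp only [id]
    field_simp
    ring
  have hinj : Set.InjOn (fun t : ℝ => t / (1 - t)) (Set.Ioo 0 1) := by
    intro s hs t ht h
    have h1s : (1:ℝ) - s ≠ 0 := by have := hs.2; intro hh; linarith
    have h1t : (1:ℝ) - t ≠ 0 := by have := ht.2; intro hh; linarith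
    field_simp at h
    linarith
  have := integral_image_eq_integral_abs_deriv_smul measurableSet_Ioo hderiv hinj
    (fun x => x ^ (a-1) * (1+x) ^ (-(a+b)))
  rw [himg] at this
  rw [this]
  apply setIntegral_congr_fun measurableSet_Ioo
  intro t ht
  have ht0 : (0:ℝ) < t := ht.1
  have h1t : (0:ℝ) < 1 - t := by linarith [ht.2]
  have hft : t / (1 - t) = t * (1 - t)⁻¹ := div_eq_mul_inv _ _
  have h1ft : 1 + t / (1 - t) = (1 - t)⁻¹ := by field_simp; ring
  dsimp only
  have e1 : |((1 - t) ^ 2)⁻¹| = (1 - t) ^ (-2:ℝ) := by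
    rw [abs_of_pos (by positivity), Real.rpow_neg h1t.le, show ((2:ℝ)) = ((2:ℕ):ℝ) by norm_num,
      Real.rpow_natCast]
  have e2 : ((1-t)⁻¹ : ℝ) ^ (a-1) = (1-t) ^ (1-a) := by
    rw [← Real.rpow_neg_one (1-t), ← Real.rpow_mul h1t.le]; congr 1; ring
  have e3 : ((1-t)⁻¹ : ℝ) ^ (-(a+b)) = (1-t) ^ (a+b) := by
    rw [← Real.rpow_neg_one (1-t), ← Real.rpow_mul h1t.le]; congr 1; ring
  have hexp : (1-t) ^ (b-1) = (1-t) ^ (-2:ℝ) * ((1-t) ^ (1-a) * (1-t) ^ (a+b)) := by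
    rw [← Real.rpow_add h1t, ← Real.rpow_add h1t]; congr 1; ring
  rw [h1ft, hft, Real.mul_rpow ht0.le (by positivity), e1, e2, e3, smul_eq_mul, hexp]
  ring

lemma one_sub_le_mul (N x : ℝ) (hN : 0 < N) (hx : 0 ≤ x) :
    1 - (1+x) ^ (-N) ≤ N * x := by
  have h1 : (0:ℝ) < 1 + x := by linarith
  have hlog : Real.log (1+x) ≤ x := by
    have := Real.log_le_sub_one_of_pos h1; linarith
  have hexp := Real.add_one_le_exp (-(Real.log (1+x) * N))
  rw [Real.rpow_def_of_pos h1, mul_neg]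
  have hlogpos : 0 ≤ Real.log (1+x) := Real.log_nonneg (by linarith)
  nlinarith [mul_le_mul_of_nonneg_left hlog hN.le]

lemma one_sub_nonneg (N x : ℝ) (hN : 0 < N) (hx : 0 ≤ x) :
    0 ≤ 1 - (1+x) ^ (-N) := by
  have : (1+x) ^ (-N) ≤ 1 :=
    Real.rpow_le_one_of_one_le_of_nonpos (by linarith) (by linarith)
  linarith

lemma one_sub_le_one (N x : ℝ) (hN : 0 < N) (hx : 0 ≤ x) :
    1 - (1+x) ^ (-N) ≤ 1 := by
  have : (0:ℝ) ≤ (1+x) ^ (-N) := Real.rpow_nonneg (by linarith) _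
  linarith

lemma int_aux (p s : ℝ) (hp : -1 < p) (hs : s ≤ 0) (hps : p + s < -1) :
    IntegrableOn (fun x : ℝ => x ^ p * (1+x) ^ s) (Set.Ioi 0) := by
  have hcont : ContinuousOn (fun x : ℝ => x ^ p * (1+x) ^ s) (Set.Ioi 0) := by
    apply ContinuousOn.mul
    · exact fun x hx => (Real.continuousAt_rpow_const x p (Or.inl (ne_of_gt hx))).continuousWithinAt
    · exact fun x hx => (Real.continuousAt_rpow_const (1+x) s
        (Or.inl (by have : (0:ℝ) < x := hx; positivity))).comp (by fun_prop) |>.continuousWithinAt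
  rw [← Set.Ioc_union_Ioi_eq_Ioi (by norm_num : (0:ℝ) ≤ 1)]
  apply IntegrableOn.union
  · have hbig : IntegrableOn (fun x : ℝ => x ^ p) (Set.Ioc 0 1) := by
      rw [← intervalIntegrable_iff_integrableOn_Ioc_of_le (by norm_num : (0:ℝ) ≤ 1)]
      exact intervalIntegral.intervalIntegrable_rpow' hp
    apply hbig.mono' ((hcont.mono (Set.Ioc_subset_Ioi_self)).aestronglyMeasurable measurableSet_Ioc)
    filter_upwards [ae_restrict_mem measurableSet_Ioc] with x hx
    have hx0 : (0:ℝ) < x := hx.1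
    rw [norm_mul, Real.norm_rpow_of_nonneg hx0.le, Real.norm_rpow_of_nonneg (by linarith),
      Real.norm_of_nonneg hx0.le, Real.norm_of_nonneg (by linarith)]
    have : (1+x) ^ s ≤ 1 := Real.rpow_le_one_of_one_le_of_nonpos (by linarith) hs
    nlinarith [Real.rpow_nonneg hx0.le p, Real.rpow_nonneg (show (0:ℝ) ≤ 1+x by linarith) s]
  · have hbig : IntegrableOn (fun x : ℝ => x ^ (p+s)) (Set.Ioi 1) :=
      integrableOn_Ioi_rpow_of_lt hps one_pos
    apply hbig.mono' ((hcont.mono (Set.Ioi_subset_Ioi zero_le_one)).aestronglyMeasurable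
      measurableSet_Ioi)
    filter_upwards [ae_restrict_mem measurableSet_Ioi] with x hx
    have hx1 : (1:ℝ) < x := hx
    have hx0 : (0:ℝ) < x := by linarith
    rw [norm_mul, Real.norm_rpow_of_nonneg hx0.le, Real.norm_rpow_of_nonneg (by linarith),
      Real.norm_of_nonneg hx0.le, Real.norm_of_nonneg (by linarith), Real.rpow_add hx0]
    have h1 : (1+x) ^ s ≤ x ^ s := Real.rpow_le_rpow_of_nonpos hx0 (by linarith) hs
    nlinarith [Real.rpow_nonneg hx0.le p, Real.rpow_nonneg hx0.le s]

lemma int_aux2 (p N : ℝ) (hp2 : -2 < p) (hp1 : p < -1) (hN : 0 < N) :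
    IntegrableOn (fun x : ℝ => x ^ p * (1 - (1+x) ^ (-N))) (Set.Ioi 0) := by
  have hcont : ContinuousOn (fun x : ℝ => x ^ p * (1 - (1+x) ^ (-N))) (Set.Ioi 0) := by
    apply ContinuousOn.mul
    · exact fun x hx => (Real.continuousAt_rpow_const x p (Or.inl (ne_of_gt hx))).continuousWithinAt
    · apply ContinuousOn.sub continuousOn_const
      exact fun x hx => (Real.continuousAt_rpow_const (1+x) (-N)
        (Or.inl (by have : (0:ℝ) < x := hx; positivity))).comp (by fun_prop) |>.continuousWithinAt
  rw [← Set.Ioc_union_Ioi_eq_Ioi (by norm_num : (0:ℝ) ≤ 1)]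
  apply IntegrableOn.union
  · have hbase : IntegrableOn (fun x : ℝ => x ^ (p+1)) (Set.Ioc 0 1) :=
      (intervalIntegral.intervalIntegrable_rpow' (a := 0) (b := 1)
        (by linarith : (-1:ℝ) < p + 1)).1
    have hbig : IntegrableOn (fun x : ℝ => N * x ^ (p+1)) (Set.Ioc 0 1) := hbase.const_mul N
    apply hbig.mono' ((hcont.mono (Set.Ioc_subset_Ioi_self)).aestronglyMeasurable measurableSet_Ioc)
    filter_upwards [ae_restrict_mem measurableSet_Ioc] with x hx
    have hx0 : (0:ℝ) < x := hx.1
    rw [norm_mul, Real.norm_rpow_of_nonneg hx0.le, Real.norm_of_nonneg hx0.le,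
      Real.norm_of_nonneg (one_sub_nonneg N x hN hx0.le), Real.rpow_add hx0, Real.rpow_one]
    have h1 := one_sub_le_mul N x hN hx0.le
    nlinarith [Real.rpow_nonneg hx0.le p, one_sub_nonneg N x hN hx0.le]
  · have hbig : IntegrableOn (fun x : ℝ => x ^ p) (Set.Ioi 1) :=
      integrableOn_Ioi_rpow_of_lt hp1 one_pos
    apply hbig.mono' ((hcont.mono (Set.Ioi_subset_Ioi zero_le_one)).aestronglyMeasurable
      measurableSet_Ioi)
    filter_upwards [ae_restrict_mem measurableSet_Ioi] with x hx
    have hx0 : (0:ℝ) < x := lt_trans one_pos hx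
    rw [norm_mul, Real.norm_rpow_of_nonneg hx0.le, Real.norm_of_nonneg hx0.le,
      Real.norm_of_nonneg (one_sub_nonneg N x hN hx0.le)]
    nlinarith [Real.rpow_nonneg hx0.le p, one_sub_le_one N x hN hx0.le,
      one_sub_nonneg N x hN hx0.le]

lemma coreJ (α N : ℝ) (hα : 2 < α) (hN : 0 < N) :
    ∫ x in Set.Ioi (0:ℝ), (1 - (1+x) ^ (-N)) * x ^ (-(2/α) - 1)
      = (α/2) * (Real.Gamma (1 - 2/α) * Real.Gamma (N + 2/α) / Real.Gamma N) := by
  set q : ℝ := 2/α with hq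
  have hα0 : (0:ℝ) < α := by linarith
  have hq0 : 0 < q := by positivity
  have hq1 : q < 1 := by rw [hq, div_lt_one hα0]; linarith
  set u : ℝ → ℝ := fun x => 1 - (1+x) ^ (-N) with hu_def
  set v : ℝ → ℝ := fun x => -(1/q) * x ^ (-q) with hv_def
  set u' : ℝ → ℝ := fun x => N * (1+x) ^ (-N-1) with hu'_def
  set v' : ℝ → ℝ := fun x => x ^ (-q-1) with hv'_def
  have hu : ∀ x ∈ Set.Ioi (0:ℝ), HasDerivAt u (u' x) x := by
    intro x hx
    have hx0 : (0:ℝ) < x := hx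
    have h1x : (1:ℝ) + x ≠ 0 := by positivity
    have hbase : HasDerivAt (fun y : ℝ => 1 + y) 1 x := (hasDerivAt_id x).const_add 1
    have := (hbase.rpow_const (p := -N) (Or.inl h1x)).const_sub 1
    refine this.congr_deriv ?_
    simp [hu'_def]
    try ring
  have hv : ∀ x ∈ Set.Ioi (0:ℝ), HasDerivAt v (v' x) x := by
    intro x hx
    have hx0 : (0:ℝ) < x := hx
    have := (Real.hasDerivAt_rpow_const (x := x) (p := -q) (Or.inl hx0.ne')).const_mul (-(1/q))
    refine this.congr_deriv ?_
    field_simp [hv'_def]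
    rfl
  have huv' : IntegrableOn (u * v') (Set.Ioi 0) := by
    have := int_aux2 (-q-1) N (by linarith) (by linarith) hN
    apply MeasureTheory.IntegrableOn.congr_fun this _ measurableSet_Ioi
    intro x hx; simp only [Pi.mul_apply, hu_def, hv'_def]; ring
  have hu'v : IntegrableOn (u' * v) (Set.Ioi 0) := by
    have := (int_aux (-q) (-N-1) (by linarith) (by linarith) (by linarith)).const_mul
      (N * -(1/q))
    apply MeasureTheory.IntegrableOn.congr_fun this _ measurableSet_Ioi
    intro x hx; simp only [Pi.mul_apply, hu'_def, hv_def]; ring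
  have h_zero : Filter.Tendsto (u * v) (nhdsWithin 0 (Set.Ioi 0)) (nhds 0) := by
    apply squeeze_zero_norm' (a := fun x => (N/q) * x ^ (1-q))
    · filter_upwards [self_mem_nhdsWithin] with x hx
      have hx0 : (0:ℝ) < x := hx
      have h1 := one_sub_le_mul N x hN hx0.le
      have h2 := one_sub_nonneg N x hN hx0.le
      have h3 : (0:ℝ) ≤ x ^ (-q) := Real.rpow_nonneg hx0.le _
      have key : x ^ (1-q) = x * x ^ (-q) := by
        rw [show (1:ℝ)-q = 1 + (-q) by ring, Real.rpow_add hx0, Real.rpow_one]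
      simp only [Pi.mul_apply, hu_def, hv_def, norm_mul, norm_neg, Real.norm_of_nonneg h2]
      rw [Real.norm_of_nonneg (by positivity), Real.norm_rpow_of_nonneg hx0.le,
        Real.norm_of_nonneg hx0.le, key]
      nlinarith [mul_le_mul_of_nonneg_right h1
        (mul_nonneg (one_div_nonneg.mpr hq0.le) h3),
        (show N/q * (x * x ^ (-q)) = N * x * (1/q * x ^ (-q)) by ring)]
    · have hcont : Filter.Tendsto (fun x : ℝ => x ^ (1-q)) (nhds 0) (nhds 0) := by
        have := (Real.continuousAt_rpow_const 0 (1-q) (Or.inr (by linarith))).tendsto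
        simpa [Real.zero_rpow (by linarith : 1-q ≠ 0)] using this
      simpa using ((hcont.mono_left nhdsWithin_le_nhds).const_mul (N/q))
  have h_infty : Filter.Tendsto (u * v) Filter.atTop (nhds 0) := by
    apply squeeze_zero_norm' (a := fun x => (1/q) * x ^ (-q))
    · filter_upwards [Filter.eventually_gt_atTop 0] with x hx0
      have h2 := one_sub_nonneg N x hN hx0.le
      have h4 := one_sub_le_one N x hN hx0.le
      have h3 : (0:ℝ) ≤ x ^ (-q) := Real.rpow_nonneg hx0.le _
      simp only [Pi.mul_apply, hu_def, hv_def, norm_mul, norm_neg, Real.norm_of_nonneg h2]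
      rw [Real.norm_of_nonneg (by positivity), Real.norm_rpow_of_nonneg hx0.le,
        Real.norm_of_nonneg hx0.le]
      nlinarith [mul_le_mul_of_nonneg_right h4
        (mul_nonneg (one_div_nonneg.mpr hq0.le) h3)]
    · simpa using ((tendsto_rpow_neg_atTop hq0).const_mul (1/q))
  have parts := MeasureTheory.integral_Ioi_mul_deriv_eq_deriv_mul hu hv huv' hu'v h_zero h_infty
  have hbeta : ∫ x in Set.Ioi (0:ℝ), u' x * v x
      = -(N/q) * (Real.Gamma (1-q) * Real.Gamma (N+q) / Real.Gamma (1-q+(N+q))) := by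
    rw [← betaIoi (1-q) (N+q) (by linarith) (by linarith), ← MeasureTheory.integral_const_mul]
    apply setIntegral_congr_fun measurableSet_Ioi
    intro x hx
    have hx0 : (0:ℝ) < x := hx
    simp only [hu'_def, hv_def]
    have e1 : (1-q) - 1 = -q := by ring
    have e2 : -((1-q) + (N+q)) = -N-1 := by ring
    rw [e1, e2]
    ring
  have hGamma1 : (1:ℝ) - q + (N+q) = N + 1 := by ring
  have hGammaN1 : Real.Gamma (N+1) = N * Real.Gamma N := Real.Gamma_add_one hN.ne'
  have main : ∫ x in Set.Ioi (0:ℝ), u x * v' x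
      = (N/q) * (Real.Gamma (1-q) * Real.Gamma (N+q) / (N * Real.Gamma N)) := by
    rw [parts, hbeta, hGamma1, hGammaN1]; ring
  rw [show (∫ x in Set.Ioi (0:ℝ), (1 - (1+x) ^ (-N)) * x ^ (-(2/α) - 1))
      = ∫ x in Set.Ioi (0:ℝ), u x * v' x from rfl, main]
  have hGN : Real.Gamma N ≠ 0 := (Real.Gamma_pos_of_pos hN).ne'
  field_simp [hq]
  rw [hq]; field_simp

theorem stmt_0 (α c N : ℝ) (hα : 2 < α) (hc : 0 < c) (hN : 0 < N) :
    ∫ r in Set.Ioi (0:ℝ), 2 * π * r * (1 - (1 + c * r ^ (-α)) ^ (-N)) =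
      π * c ^ (2/α) * Real.Gamma (N + 2/α) * Real.Gamma (1 - 2/α) / Real.Gamma N := by
  have hα0 : (0:ℝ) < α := by linarith
  set q : ℝ := 2/α with hq
  have hq0 : 0 < q := by positivity
  set B1 : ℝ := ∫ y in Set.Ioi (0:ℝ), y ^ (-q-1) * (1 - (1 + c*y) ^ (-N)) with hB1
  set B0 : ℝ := ∫ y in Set.Ioi (0:ℝ), y ^ (-q-1) * (1 - (1 + y) ^ (-N)) with hB0
  have hA := MeasureTheory.integral_comp_rpow_Ioi
      (fun y => (2*π/α) * (y ^ (-q-1) * (1 - (1 + c*y) ^ (-N))))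
      (p := -α) (by simp [hα0.ne'] : (-α:ℝ) ≠ 0)
  have step1 : (∫ r in Set.Ioi (0:ℝ), 2 * π * r * (1 - (1 + c * r ^ (-α)) ^ (-N)))
      = (2*π/α) * B1 := by
    rw [hB1, ← MeasureTheory.integral_const_mul, ← hA]
    apply setIntegral_congr_fun measurableSet_Ioi
    intro x hx
    have hx0 : (0:ℝ) < x := hx
    dsimp only
    set T : ℝ := 1 - (1 + c * x ^ (-α)) ^ (-N) with hT
    have e1 : (x ^ (-α)) ^ (-q-1) = x ^ (α + 2) := by
      rw [← Real.rpow_mul hx0.le]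
      congr 1
      rw [hq]
      field_simp
      ring
    have e3 : x ^ (-α - 1) * x ^ (α + 2) = x := by
      rw [← Real.rpow_add hx0, show -α - 1 + (α + 2) = (1:ℝ) by ring, Real.rpow_one]
    have e4 : α * (2*π/α) = 2*π := by field_simp
    rw [smul_eq_mul, abs_neg, abs_of_pos hα0, e1,
      show α * x ^ (-α - 1) * (2*π/α * (x ^ (α + 2) * T))
        = (α * (2*π/α)) * ((x ^ (-α - 1) * x ^ (α + 2)) * T) from by ring, e3, e4]
    ring
  have hB := MeasureTheory.integral_comp_mul_left_Ioi
      (fun y => y ^ (-q-1) * (1 - (1 + y) ^ (-N))) 0 hc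
  simp only [mul_zero] at hB
  have hpt : (∫ x in Set.Ioi (0:ℝ), (c*x) ^ (-q-1) * (1 - (1 + c*x) ^ (-N)))
      = c ^ (-q-1) * B1 := by
    rw [hB1, ← MeasureTheory.integral_const_mul]
    apply setIntegral_congr_fun measurableSet_Ioi
    intro x hx
    have hx0 : (0:ℝ) < x := hx
    dsimp only
    rw [Real.mul_rpow hc.le hx0.le]
    ring
  have h1 : c ^ (-q-1) * B1 = c⁻¹ * B0 := by
    rw [← hpt, hB, hB0]
    simp [smul_eq_mul]
  have h4 : c ^ (q+1) * c ^ (-q-1) = 1 := by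
    rw [← Real.rpow_add hc, show q + 1 + (-q-1) = (0:ℝ) by ring, Real.rpow_zero]
  have h5 : c ^ (q+1) = c ^ q * c := by rw [Real.rpow_add hc, Real.rpow_one]
  have step2 : B1 = c ^ q * B0 := by
    calc B1 = (c ^ (q+1) * c ^ (-q-1)) * B1 := by rw [h4]; ring
      _ = c ^ (q+1) * (c ^ (-q-1) * B1) := by ring
      _ = c ^ (q+1) * (c⁻¹ * B0) := by rw [h1]
      _ = c ^ q * B0 := by rw [h5]; field_simp
  have hB0val : B0 = (α/2) * (Real.Gamma (1 - q) * Real.Gamma (N + q) / Real.Gamma N) := by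
    rw [hB0, ← coreJ α N hα hN]
    apply setIntegral_congr_fun measurableSet_Ioi
    intro x hx
    rw [hq]
    ring
  rw [step1, step2, hB0val]
  have hGN : Real.Gamma N ≠ 0 := (Real.Gamma_pos_of_pos hN).ne'
  field_simp
end

section
/- Let Z be a nonnegative real random variable on a probability space and c > 0 a real number such that E[exp(−s·Z)] = exp(−c·√s) for all s ≥ 0. Then for every z > 0, P(Z ≥ z) = erf(c/(2√z)). -/
open MeasureTheory Real

/-- The error function `erf x = (2/√π) ∫₀ˣ exp(-u²) du`. -/
noncomputable def erf (x : ℝ) : ℝ := 2 / Real.sqrt π * ∫ u in (0:ℝ)..x, Real.exp (-u^2)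

open Set
open scoped NNReal ENNReal


lemma phi_hasDeriv (k : ℝ) {x : ℝ} (hx0 : x ≠ 0) :
    HasDerivAt (fun u : ℝ => u - k/u) (1 + k/x^2) x := by
  have h2 : HasDerivAt (fun u : ℝ => u - k/u) (1 - k * -(x^2)⁻¹) x := by
    simpa [div_eq_mul_inv] using (hasDerivAt_id' x).fun_sub ((hasDerivAt_inv hx0).const_mul k)
  convert h2 using 1; field_simp; ring

lemma phi_image (k : ℝ) (hk : 0 < k) : (fun u : ℝ => u - k/u) '' (Ioi 0) = univ := by
  apply eq_univ_of_forall
  intro w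
  have hr : 0 ≤ w^2 + 4*k := by positivity
  set r := Real.sqrt (w^2 + 4*k) with hrdef
  have hr2 : r^2 = w^2 + 4*k := Real.sq_sqrt hr
  have habs : |w| < r := by
    rw [← Real.sqrt_sq_eq_abs]
    exact Real.sqrt_lt_sqrt (sq_nonneg w) (by linarith)
  have hw := abs_le.mp habs.le
  have hu : 0 < (w + r)/2 := by nlinarith [abs_nonneg w]
  refine ⟨(w+r)/2, hu, ?_⟩
  have hne : (w+r)/2 ≠ 0 := ne_of_gt hu
  have hkey : k / ((w+r)/2) = (w+r)/2 - w := by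
    rw [div_eq_iff hne]; nlinarith
  simp only [hkey]; ring

lemma phi_injOn (k : ℝ) (hk : 0 < k) : InjOn (fun u : ℝ => u - k/u) (Ioi 0) := by
  have : StrictMonoOn (fun u : ℝ => u - k/u) (Ioi 0) := by
    intro a ha b hb hab
    have ha0 : (0:ℝ) < a := ha
    have : k/b < k/a := div_lt_div_of_pos_left hk ha0 hab
    simp only; linarith
  exact this.injOn

-- G1
lemma int_Ioi_half (k : ℝ) (hk : 0 < k) :
    ∫ u in Ioi (0:ℝ), Real.exp (-(u - k/u)^2) = Real.sqrt π / 2 := by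
  have cov : (∫ w in (fun u : ℝ => u - k/u) '' (Ioi (0:ℝ)), Real.exp (-w^2))
      = ∫ u in Ioi (0:ℝ), |1 + k/u^2| • Real.exp (-(u - k/u)^2) :=
    integral_image_eq_integral_abs_deriv_smul measurableSet_Ioi
      (fun x hx => (phi_hasDeriv k (ne_of_gt hx)).hasDerivWithinAt) (phi_injOn k hk) _
  rw [phi_image k hk] at cov
  have lhs : (∫ w in (univ : Set ℝ), Real.exp (-w^2)) = Real.sqrt π := by
    rw [Measure.restrict_univ]
    simpa using integral_gaussian 1
  -- substitution ψ u = k/u on the second piece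
  have cov2 : (∫ w in (fun u : ℝ => k/u) '' (Ioi (0:ℝ)), Real.exp (-(w - k/w)^2))
      = ∫ u in Ioi (0:ℝ), |(-(k/u^2))| • Real.exp (-((k/u) - k/(k/u))^2) := by
    apply integral_image_eq_integral_abs_deriv_smul measurableSet_Ioi
    · intro x hx
      have : HasDerivAt (fun u : ℝ => k/u) (k * -(x^2)⁻¹) x := by
        simpa [div_eq_mul_inv] using (hasDerivAt_inv (ne_of_gt hx)).const_mul k
      have h2 : HasDerivAt (fun u : ℝ => k/u) (-(k/x^2)) x := by
        convert this using 1; field_simp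
      exact h2.hasDerivWithinAt
    · intro a ha b hb hab
      have ha0 : (0:ℝ) < a := ha
      have hb0 : (0:ℝ) < b := hb
      field_simp at hab
      exact hab.symm
  have ψimage : (fun u : ℝ => k/u) '' (Ioi (0:ℝ)) = Ioi 0 := by
    apply Subset.antisymm
    · rintro _ ⟨u, hu, rfl⟩; exact div_pos hk hu
    · intro w hw; exact ⟨k/w, div_pos hk hw, by field_simp⟩
  rw [ψimage] at cov2
  have simp2 : ∀ u ∈ Ioi (0:ℝ), |(-(k/u^2))| • Real.exp (-((k/u) - k/(k/u))^2)
      = (k/u^2) * Real.exp (-(u - k/u)^2) := by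
    intro u hu
    have hu0 : (0:ℝ) < u := hu
    have : k/(k/u) = u := by field_simp
    rw [this, abs_neg, abs_of_pos (by positivity : (0:ℝ) < k/u^2)]
    have : (k/u - u)^2 = (u - k/u)^2 := by ring
    rw [smul_eq_mul, this]
  rw [setIntegral_congr_fun measurableSet_Ioi simp2] at cov2
  -- integrability
  have measA : Measurable fun u : ℝ => Real.exp (-(u - k/u)^2) := by fun_prop
  have intA : IntegrableOn (fun u : ℝ => Real.exp (-(u - k/u)^2)) (Ioi 0) := by
    apply Integrable.mono' ((integrable_exp_neg_mul_sq one_pos).const_mul (Real.exp (2*k))).restrict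
      measA.aestronglyMeasurable.restrict
    filter_upwards [ae_restrict_mem measurableSet_Ioi] with u hu
    have hu0 : (0:ℝ) < u := hu
    rw [Real.norm_eq_abs, abs_of_pos (Real.exp_pos _), ← Real.exp_add]
    apply Real.exp_le_exp.mpr
    have h1 : (u - k/u)^2 = u^2 - 2*k + (k/u)^2 := by field_simp; ring
    nlinarith [sq_nonneg (k/u)]
  have intB : IntegrableOn (fun u : ℝ => (k/u^2) * Real.exp (-(u - k/u)^2)) (Ioi 0) := by
    have measB : Measurable fun u : ℝ => (k/u^2) * Real.exp (-(u - k/u)^2) := by fun_prop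
    apply Integrable.mono' ((integrable_exp_neg_mul_sq one_pos).const_mul
        (Real.exp (2*k) / k)).restrict measB.aestronglyMeasurable.restrict
    filter_upwards [ae_restrict_mem measurableSet_Ioi] with u hu
    have hu0 : (0:ℝ) < u := hu
    have h1 : (u - k/u)^2 = u^2 - 2*k + (k/u)^2 := by field_simp; ring
    have h2 : Real.exp (-(u - k/u)^2) = Real.exp (2*k) * Real.exp (-u^2) * Real.exp (-(k/u)^2) := by
      rw [← Real.exp_add, ← Real.exp_add]; congr 1; linarith
    rw [Real.norm_eq_abs, abs_of_pos (by positivity), h2]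
    have key : (k/u^2) * Real.exp (-(k/u)^2) ≤ 1/k := by
      have hx : (0:ℝ) < (k/u)^2 := by positivity
      have : (k/u)^2 * Real.exp (-(k/u)^2) ≤ 1 := by
        have := Real.add_one_le_exp ((k/u)^2)
        have hh := Real.exp_pos ((k/u)^2)
        rw [Real.exp_neg]
        rw [mul_inv_le_iff₀ hh, one_mul]
        linarith
      have hku : (k/u^2) = (1/k) * (k/u)^2 := by field_simp
      rw [hku, mul_assoc]
      calc (1/k) * ((k/u)^2 * Real.exp (-(k/u)^2)) ≤ (1/k) * 1 :=
        mul_le_mul_of_nonneg_left this (by positivity)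
      _ = 1/k := mul_one _
    calc (k/u^2) * (Real.exp (2*k) * Real.exp (-u^2) * Real.exp (-(k/u)^2))
        = (Real.exp (2*k) * Real.exp (-u^2)) * ((k/u^2) * Real.exp (-(k/u)^2)) := by ring
      _ ≤ (Real.exp (2*k) * Real.exp (-u^2)) * (1/k) := by
          apply mul_le_mul_of_nonneg_left key (by positivity)
      _ = Real.exp (2*k) / k * Real.exp (-1*u^2) := by rw [neg_one_mul]; ring
  have split : (∫ u in Ioi (0:ℝ), |1 + k/u^2| • Real.exp (-(u - k/u)^2))
      = (∫ u in Ioi (0:ℝ), Real.exp (-(u - k/u)^2))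
        + ∫ u in Ioi (0:ℝ), (k/u^2) * Real.exp (-(u - k/u)^2) := by
    rw [← integral_add intA intB]
    apply setIntegral_congr_fun measurableSet_Ioi
    intro u hu
    have hu0 : (0:ℝ) < u := hu
    simp only [smul_eq_mul, abs_of_pos (by positivity : (0:ℝ) < 1 + k/u^2)]
    ring
  rw [split, ← cov2] at cov
  rw [lhs] at cov
  linarith


lemma glasser_pos (a : ℝ) (ha : 0 < a) :
    ∫ u : ℝ, Real.exp (-(a/u^2) - u^2) = Real.sqrt π * Real.exp (-(2 * Real.sqrt a)) := by
  set k := Real.sqrt a with hkdef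
  have hk : 0 < k := Real.sqrt_pos.mpr ha
  have hk2 : k^2 = a := Real.sq_sqrt ha.le
  have hpt : ∀ u : ℝ, u ≠ 0 →
      Real.exp (-(a/u^2) - u^2) = Real.exp (-(2*k)) * Real.exp (-(u - k/u)^2) := by
    intro u hu
    rw [← Real.exp_add]
    congr 1
    have : (u - k/u)^2 = u^2 - 2*k + k^2/u^2 := by field_simp; ring
    rw [this, hk2]; ring
  have hioi : ∫ u in Ioi (0:ℝ), Real.exp (-(a/u^2) - u^2)
      = Real.exp (-(2*k)) * (Real.sqrt π / 2) := by
    rw [← int_Ioi_half k hk, ← integral_const_mul]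
    exact setIntegral_congr_fun measurableSet_Ioi fun u hu => hpt u (ne_of_gt hu)
  have heven : ∀ u : ℝ, Real.exp (-(a/(-u)^2) - (-u)^2) = Real.exp (-(a/u^2) - u^2) := by
    intro u; rw [neg_sq]
  have hIic : ∫ u in Iic (0:ℝ), Real.exp (-(a/u^2) - u^2)
      = ∫ u in Ioi (0:ℝ), Real.exp (-(a/u^2) - u^2) := by
    rw [← neg_zero, ← integral_comp_neg_Iic, neg_zero]
    exact setIntegral_congr_fun measurableSet_Iic fun u _ => (heven u).symm
  have hmeas : Measurable fun u : ℝ => Real.exp (-(a/u^2) - u^2) := by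
    apply Real.measurable_exp.comp
    exact ((measurable_const.div (measurable_id.pow_const 2)).neg.sub
      (measurable_id.pow_const 2))
  have hint : Integrable fun u : ℝ => Real.exp (-(a/u^2) - u^2) := by
    apply Integrable.mono' (integrable_exp_neg_mul_sq one_pos) hmeas.aestronglyMeasurable
    refine Filter.Eventually.of_forall fun u => ?_
    rw [Real.norm_eq_abs, abs_of_pos (Real.exp_pos _)]
    apply Real.exp_le_exp.mpr
    have : 0 ≤ a/u^2 := by positivity
    nlinarith
  have hsplit : ∫ u : ℝ, Real.exp (-(a/u^2) - u^2)
      = (∫ u in Iic (0:ℝ), Real.exp (-(a/u^2) - u^2))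
        + ∫ u in Ioi (0:ℝ), Real.exp (-(a/u^2) - u^2) := by
    rw [← setIntegral_union (Iic_disjoint_Ioi le_rfl) measurableSet_Ioi
      hint.integrableOn hint.integrableOn, Set.Iic_union_Ioi,
      MeasureTheory.setIntegral_univ]
  rw [hsplit, hIic, hioi]
  ring


noncomputable def gdens : ℝ → ℝ≥0 := fun u => Real.toNNReal (Real.exp (-u^2) / Real.sqrt π)

noncomputable def gammaM : Measure ℝ := volume.withDensity fun u => ((gdens u : ℝ≥0) : ℝ≥0∞)

lemma gdens_meas : Measurable gdens :=
  ((measurable_exp.comp (measurable_id.pow_const 2).neg).div_const _).real_toNNReal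

lemma gdens_coe (u : ℝ) : (gdens u : ℝ) = Real.exp (-u^2) / Real.sqrt π :=
  Real.coe_toNNReal _ (div_nonneg (Real.exp_pos _).le (Real.sqrt_nonneg _))

lemma integrable_gdens : Integrable fun u : ℝ => Real.exp (-u^2) / Real.sqrt π := by
  apply Integrable.div_const
  simpa using integrable_exp_neg_mul_sq (b := (1:ℝ)) one_pos

lemma integrable_gdens' : Integrable fun u : ℝ => (gdens u : ℝ) := by
  simpa only [gdens_coe] using integrable_gdens

lemma integral_gdens : ∫ u : ℝ, Real.exp (-u^2) / Real.sqrt π = 1 := by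
  rw [integral_div]
  rw [show (fun u : ℝ => Real.exp (-u^2)) = fun u : ℝ => Real.exp (-1*u^2) by funext u; ring_nf]
  rw [integral_gaussian, div_one, div_self]
  positivity

lemma gamma_integral (g : ℝ → ℝ) :
    ∫ x, g x ∂gammaM = ∫ u : ℝ, (Real.exp (-u^2) / Real.sqrt π) * g u := by
  rw [gammaM, integral_withDensity_eq_integral_smul gdens_meas]
  congr 1; funext u; rw [NNReal.smul_def, gdens_coe u, smul_eq_mul]

lemma gamma_apply {s : Set ℝ} (hs : MeasurableSet s) :
    gammaM s = ENNReal.ofReal (∫ u in s, Real.exp (-u^2) / Real.sqrt π) := by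
  rw [gammaM, withDensity_apply _ hs,
    lintegral_coe_eq_integral gdens integrable_gdens'.restrict]
  congr 1
  exact integral_congr_ae (Filter.Eventually.of_forall fun u => gdens_coe u)

instance : IsProbabilityMeasure gammaM := by
  constructor
  rw [show (univ : Set ℝ) = (univ : Set ℝ) from rfl, gamma_apply MeasurableSet.univ,
    Measure.restrict_univ, integral_gdens, ENNReal.ofReal_one]

lemma gamma_ac : gammaM ≪ (volume : Measure ℝ) :=
  withDensity_absolutelyContinuous _ _

-- integrability from a.e. support in Icc 0 1
lemma integrable_of_supp (m : Measure ℝ) [IsProbabilityMeasure m]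
    (hm : m ((Icc (0:ℝ) 1)ᶜ) = 0) {g : ℝ → ℝ} (hgm : Measurable g)
    (hb : ∀ x ∈ Icc (0:ℝ) 1, |g x| ≤ 1) : Integrable g m := by
  refine ⟨hgm.aestronglyMeasurable, ?_⟩
  apply HasFiniteIntegral.of_bounded (C := 1)
  have hae : ∀ᵐ x ∂m, x ∈ Icc (0:ℝ) 1 := mem_ae_iff.mpr hm
  filter_upwards [hae] with x hx
  rw [Real.norm_eq_abs]; exact hb x hx

-- key uniqueness lemma
lemma measure_eq_of_moments (m₁ m₂ : Measure ℝ) [IsProbabilityMeasure m₁]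
    [IsProbabilityMeasure m₂]
    (h₁ : m₁ ((Icc (0:ℝ) 1)ᶜ) = 0) (h₂ : m₂ ((Icc (0:ℝ) 1)ᶜ) = 0)
    (hmom : ∀ n : ℕ, (∫ x, x^n ∂m₁) = ∫ x, x^n ∂m₂) : m₁ = m₂ := by
  have hae₁ : ∀ᵐ x ∂m₁, x ∈ Icc (0:ℝ) 1 := mem_ae_iff.mpr h₁
  have hae₂ : ∀ᵐ x ∂m₂, x ∈ Icc (0:ℝ) 1 := mem_ae_iff.mpr h₂
  have hmono : ∀ (n : ℕ) (m : Measure ℝ), IsProbabilityMeasure m → m ((Icc (0:ℝ) 1)ᶜ) = 0 →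
      Integrable (fun x : ℝ => x^n) m := by
    intro n m hp hs
    exact integrable_of_supp m hs (measurable_id.pow_const n)
      (fun x hx => by rw [abs_of_nonneg (pow_nonneg hx.1 n)]; exact pow_le_one₀ hx.1 hx.2)
  have hpoly : ∀ p : Polynomial ℝ, (∫ x, p.eval x ∂m₁) = ∫ x, p.eval x ∂m₂ := by
    intro p
    have h1 : ∀ (m : Measure ℝ), IsProbabilityMeasure m → m ((Icc (0:ℝ) 1)ᶜ) = 0 →
        (∫ x, p.eval x ∂m)
          = ∑ i ∈ Finset.range (p.natDegree + 1), p.coeff i * ∫ x, x^i ∂m := by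
      intro m hp hs
      calc (∫ x, p.eval x ∂m)
          = ∫ x, ∑ i ∈ Finset.range (p.natDegree + 1), p.coeff i * x^i ∂m := by
            congr 1; funext x; exact Polynomial.eval_eq_sum_range (p := p) x
        _ = ∑ i ∈ Finset.range (p.natDegree + 1), ∫ x, p.coeff i * x^i ∂m := by
            apply integral_finset_sum
            exact fun i _ => (hmono i m hp hs).const_mul _
        _ = ∑ i ∈ Finset.range (p.natDegree + 1), p.coeff i * ∫ x, x^i ∂m := by
            simp [integral_const_mul]
    rw [h1 m₁ inferInstance h₁, h1 m₂ inferInstance h₂]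
    exact Finset.sum_congr rfl fun i _ => by rw [hmom i]
  have hbc : ∀ g : ℝ → ℝ, Continuous g → (∃ C, ∀ x, |g x| ≤ C) →
      (∫ x, g x ∂m₁) = ∫ x, g x ∂m₂ := by
    intro g hg ⟨C, hC⟩
    have hint : ∀ (m : Measure ℝ), IsProbabilityMeasure m → Integrable g m := by
      intro m hp
      refine ⟨hg.aestronglyMeasurable, HasFiniteIntegral.of_bounded (C := C) ?_⟩
      exact Filter.Eventually.of_forall fun x => by rw [Real.norm_eq_abs]; exact hC x
    by_contra hne
    set D := (∫ x, g x ∂m₁) - ∫ x, g x ∂m₂ with hD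
    have hD0 : D ≠ 0 := sub_ne_zero.mpr hne
    obtain ⟨p, hp⟩ := exists_polynomial_near_of_continuousOn 0 1 g hg.continuousOn
      (|D|/4) (by positivity)
    have key : ∀ (m : Measure ℝ), IsProbabilityMeasure m → m ((Icc (0:ℝ) 1)ᶜ) = 0 →
        |(∫ x, g x ∂m) - ∫ x, p.eval x ∂m| ≤ |D|/4 := by
      intro m hpm hs
      have hae : ∀ᵐ x ∂m, x ∈ Icc (0:ℝ) 1 := mem_ae_iff.mpr hs
      obtain ⟨M, hM⟩ := isCompact_Icc.exists_bound_of_continuousOn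
        (p.continuous.continuousOn : ContinuousOn (fun x : ℝ => p.eval x) (Icc 0 1))
      have hip : Integrable (fun x => p.eval x) m := by
        refine Integrable.mono' (integrable_const M) p.continuous.aestronglyMeasurable ?_
        filter_upwards [hae] with x hx
        exact hM x hx
      have hig : Integrable g m := hint m hpm
      rw [← integral_sub hig hip]
      have := norm_integral_le_of_norm_le_const (μ := m)
        (f := fun x => g x - p.eval x) (C := |D|/4) ?_
      · simpa [Real.norm_eq_abs] using this
      · filter_upwards [hae] with x hx
        rw [Real.norm_eq_abs, abs_sub_comm]
        exact (hp x hx).le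
    have k₁ := key m₁ inferInstance h₁
    have k₂ := key m₂ inferInstance h₂
    rw [hpoly p] at k₁
    have : |D| ≤ |D|/4 + |D|/4 := by
      rw [hD]
      calc |(∫ x, g x ∂m₁) - ∫ x, g x ∂m₂|
          = |((∫ x, g x ∂m₁) - ∫ x, p.eval x ∂m₂) + ((∫ x, p.eval x ∂m₂) - ∫ x, g x ∂m₂)| := by
            ring_nf
        _ ≤ |(∫ x, g x ∂m₁) - ∫ x, p.eval x ∂m₂| + |(∫ x, p.eval x ∂m₂) - ∫ x, g x ∂m₂| :=
            abs_add_le _ _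
        _ ≤ |D|/4 + |D|/4 := add_le_add k₁ (by rw [abs_sub_comm]; exact k₂)
    have hDpos : 0 < |D| := abs_pos.mpr hD0
    linarith
  -- conclude
  apply ext_of_forall_lintegral_eq_of_IsFiniteMeasure
  intro f
  have hgc : Continuous fun x => (f x : ℝ) := NNReal.continuous_coe.comp f.continuous
  have hgb : ∃ C, ∀ x, |((f x : ℝ))| ≤ C := by
    obtain ⟨C, hC⟩ := f.bounded
    refine ⟨C + (f 0 : ℝ), fun x => ?_⟩
    have h1 := hC x 0
    rw [NNReal.dist_eq] at h1
    rw [abs_of_nonneg (f x).coe_nonneg]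
    have := abs_le.mp h1
    linarith [(f 0).coe_nonneg]
  have hint : ∀ (m : Measure ℝ), IsProbabilityMeasure m →
      Integrable (fun x => ((f x : ℝ))) m := by
    intro m hp
    obtain ⟨C, hC⟩ := hgb
    refine ⟨hgc.aestronglyMeasurable, HasFiniteIntegral.of_bounded (C := C) ?_⟩
    exact Filter.Eventually.of_forall fun x => by rw [Real.norm_eq_abs]; exact hC x
  rw [lintegral_coe_eq_integral f (hint m₁ inferInstance),
    lintegral_coe_eq_integral f (hint m₂ inferInstance),
    hbc _ hgc hgb]

theorem stmt_3 {Ω : Type*} [MeasureSpace Ω]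
    [IsProbabilityMeasure (volume : Measure Ω)]
    (Z : Ω → ℝ) (hZ : ∀ ω, 0 ≤ Z ω) (c : ℝ) (hc : 0 < c)
    (hL : ∀ s : ℝ, 0 ≤ s →
      (∫ ω, Real.exp (-(s * Z ω))) = Real.exp (-(c * Real.sqrt s))) :
    ∀ z : ℝ, 0 < z → (volume {ω | z ≤ Z ω}).toReal = erf (c / (2 * Real.sqrt z)) := by
  intro z hz
  -- Z is a.e. measurable
  have h1 := hL 1 zero_le_one
  have hInt1 : Integrable (fun ω => Real.exp (-(1 * Z ω))) (volume : Measure Ω) := by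
    by_contra h
    rw [integral_undef h] at h1
    exact (Real.exp_pos _).ne' h1.symm
  have hZm : AEMeasurable Z (volume : Measure Ω) := by
    have h2 : AEMeasurable (fun ω => Real.exp (-(1 * Z ω))) (volume : Measure Ω) :=
      hInt1.aestronglyMeasurable.aemeasurable
    have heq : Z = fun ω => -Real.log (Real.exp (-(1 * Z ω))) := by
      funext ω; rw [Real.log_exp]; ring
    rw [heq]
    exact Real.measurable_log.neg.comp_aemeasurable h2
  set T : Ω → ℝ := fun ω => Real.exp (-Z ω) with hT
  have hTm : AEMeasurable T (volume : Measure Ω) :=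
    (Real.measurable_exp.comp measurable_neg).comp_aemeasurable hZm
  set V : ℝ → ℝ := fun u => Real.exp (-(c^2/(4*u^2))) with hV
  have hVm : Measurable V :=
    Real.measurable_exp.comp ((measurable_const.div ((measurable_id.pow_const 2).const_mul 4)).neg)
  set μ' := Measure.map T (volume : Measure Ω) with hμ'
  set ν' := Measure.map V gammaM with hν'
  haveI : IsProbabilityMeasure μ' := Measure.isProbabilityMeasure_map hTm
  haveI : IsProbabilityMeasure ν' := Measure.isProbabilityMeasure_map hVm.aemeasurable
  have hVnonneg : ∀ u : ℝ, 0 ≤ c^2/(4*u^2) := by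
    intro u; positivity
  have hsupp₁ : μ' ((Icc (0:ℝ) 1)ᶜ) = 0 := by
    rw [hμ', Measure.map_apply_of_aemeasurable hTm measurableSet_Icc.compl]
    convert measure_empty (μ := (volume : Measure Ω))
    ext ω
    simp only [mem_preimage, mem_compl_iff, mem_Icc, mem_empty_iff_false, iff_false, not_not]
    exact ⟨(Real.exp_pos _).le, Real.exp_le_one_iff.mpr (neg_nonpos.mpr (hZ ω))⟩
  have hsupp₂ : ν' ((Icc (0:ℝ) 1)ᶜ) = 0 := by
    rw [hν', Measure.map_apply hVm measurableSet_Icc.compl]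
    convert measure_empty (μ := gammaM)
    ext u
    simp only [mem_preimage, mem_compl_iff, mem_Icc, mem_empty_iff_false, iff_false, not_not]
    exact ⟨(Real.exp_pos _).le, Real.exp_le_one_iff.mpr (neg_nonpos.mpr (hVnonneg u))⟩
  have hmom₁ : ∀ n : ℕ, (∫ x, x^n ∂μ') = Real.exp (-(c * Real.sqrt n)) := by
    intro n
    rw [hμ', integral_map hTm (continuous_pow n).aestronglyMeasurable]
    have hptw : ∀ ω, (T ω)^n = Real.exp (-((n:ℝ) * Z ω)) := by
      intro ω
      rw [hT, ← Real.exp_nat_mul]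
      congr 1; ring
    simp_rw [hptw]
    exact hL n (Nat.cast_nonneg n)
  have hmom₂ : ∀ n : ℕ, (∫ x, x^n ∂ν') = Real.exp (-(c * Real.sqrt n)) := by
    intro n
    rw [hν', integral_map hVm.aemeasurable (continuous_pow n).aestronglyMeasurable]
    rcases Nat.eq_zero_or_pos n with rfl | hn
    · simp
    · rw [gamma_integral]
      set a := (n:ℝ) * c^2 / 4 with ha
      have hapos : 0 < a := by
        rw [ha]; positivity
      have hptw : ∀ u : ℝ, (Real.exp (-u^2) / Real.sqrt π) * (V u)^n
          = (1 / Real.sqrt π) * Real.exp (-(a/u^2) - u^2) := by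
        intro u
        rw [hV]
        simp only
        rw [← Real.exp_nat_mul]
        have harg : (n:ℝ) * -(c^2/(4*u^2)) = -(a/u^2) := by
          rcases eq_or_ne u 0 with rfl | hu
          · simp
          · rw [ha]; field_simp
        rw [harg]
        have hsplit2 : Real.exp (-(a/u^2) - u^2)
            = Real.exp (-u^2) * Real.exp (-(a/u^2)) := by
          rw [← Real.exp_add]; congr 1; ring
        rw [hsplit2]; ring
      simp_rw [hptw]
      rw [integral_const_mul, glasser_pos a hapos]
      have hπ : Real.sqrt π ≠ 0 := by positivity
      rw [← mul_assoc, one_div, inv_mul_cancel₀ hπ, one_mul]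
      congr 1
      have : Real.sqrt a = c * Real.sqrt n / 2 := by
        have hsq : a = (c * Real.sqrt n / 2)^2 := by
          rw [ha, div_pow, mul_pow, Real.sq_sqrt (Nat.cast_nonneg n)]
          ring
        rw [hsq, Real.sqrt_sq (by positivity)]
      rw [this]
      ring
  have hmom : ∀ n : ℕ, (∫ x, x^n ∂μ') = ∫ x, x^n ∂ν' := by
    intro n; rw [hmom₁ n, hmom₂ n]
  have hμν : μ' = ν' := measure_eq_of_moments μ' ν' hsupp₁ hsupp₂ hmom
  -- final tail computation
  set t := c / (2 * Real.sqrt z) with htdef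
  have hsz : 0 < Real.sqrt z := Real.sqrt_pos.mpr hz
  have htpos : 0 < t := by rw [htdef]; positivity
  have ht2 : t^2 = c^2/(4*z) := by
    rw [htdef]
    rw [div_pow, mul_pow, Real.sq_sqrt hz.le]
    norm_num
  have hpre : T ⁻¹' (Iic (Real.exp (-z))) = {ω | z ≤ Z ω} := by
    ext ω
    simp only [mem_preimage, mem_Iic, hT, Real.exp_le_exp, neg_le_neg_iff, mem_setOf_eq]
  have h2 : (volume : Measure Ω) {ω | z ≤ Z ω} = μ' (Iic (Real.exp (-z))) := by
    rw [hμ', Measure.map_apply_of_aemeasurable hTm measurableSet_Iic, hpre]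
  have hVpre : V ⁻¹' (Iic (Real.exp (-z))) = Icc (-t) t \ {0} := by
    ext u
    simp only [mem_preimage, mem_Iic, hV, Real.exp_le_exp, neg_le_neg_iff, mem_diff,
      mem_Icc, mem_singleton_iff]
    constructor
    · intro h
      have hu0 : u ≠ 0 := by
        rintro rfl
        norm_num at h
        linarith
      have hu2 : (0:ℝ) < u^2 := by positivity
      rw [le_div_iff₀ (by positivity : (0:ℝ) < 4*u^2)] at h
      have husq : u^2 ≤ t^2 := by
        rw [ht2, le_div_iff₀ (by positivity : (0:ℝ) < 4*z)]
        nlinarith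
      have habs : |u| ≤ t := by
        rw [← Real.sqrt_sq_eq_abs, ← Real.sqrt_sq htpos.le]
        exact Real.sqrt_le_sqrt husq
      exact ⟨abs_le.mp habs, hu0⟩
    · rintro ⟨⟨hl, hr⟩, hu0⟩
      have hu2 : (0:ℝ) < u^2 := by positivity
      rw [le_div_iff₀ (by positivity : (0:ℝ) < 4*u^2)]
      have habs : |u| ≤ t := abs_le.mpr ⟨hl, hr⟩
      have husq : u^2 ≤ t^2 := by nlinarith [sq_abs u, abs_nonneg u]
      rw [ht2] at husq
      rw [le_div_iff₀ (by positivity : (0:ℝ) < 4*z)] at husq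
      nlinarith
  have h3 : ν' (Iic (Real.exp (-z))) = gammaM (Icc (-t) t) := by
    rw [hν', Measure.map_apply hVm measurableSet_Iic, hVpre]
    exact measure_diff_null (gamma_ac (measure_singleton 0))
  have h4 : gammaM (Icc (-t) t) = ENNReal.ofReal (erf t) := by
    rw [gamma_apply measurableSet_Icc]
    congr 1
    have hle : -t ≤ t := by linarith
    rw [MeasureTheory.integral_Icc_eq_integral_Ioc,
      ← intervalIntegral.integral_of_le hle]
    have heven : (∫ u in (-t)..(0:ℝ), Real.exp (-u^2) / Real.sqrt π)
        = ∫ u in (0:ℝ)..t, Real.exp (-u^2) / Real.sqrt π := by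
      have := intervalIntegral.integral_comp_neg (a := (0:ℝ)) (b := t)
        (fun u : ℝ => Real.exp (-u^2) / Real.sqrt π)
      simp only [neg_sq, neg_zero] at this
      rw [← this]
    have hsplit : (∫ u in (-t)..t, Real.exp (-u^2) / Real.sqrt π)
        = (∫ u in (-t)..(0:ℝ), Real.exp (-u^2) / Real.sqrt π)
          + ∫ u in (0:ℝ)..t, Real.exp (-u^2) / Real.sqrt π := by
      rw [intervalIntegral.integral_add_adjacent_intervals] <;>
        exact integrable_gdens.intervalIntegrable
    rw [hsplit, heven, erf]
    rw [intervalIntegral.integral_div]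
    ring
  have herfnn : 0 ≤ erf t := by
    rw [erf]
    have : 0 ≤ ∫ u in (0:ℝ)..t, Real.exp (-u^2) :=
      intervalIntegral.integral_nonneg htpos.le (fun u _ => (Real.exp_pos _).le)
    positivity
  rw [h2, hμν, h3, h4, ENNReal.toReal_ofReal herfnn]
end
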